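/- Let λ ≥ max{1, B²} and let φ₁, …, φₙ ∈ ℝ^p be vectors with ‖φᵢ‖₂ ≤ B for all i. Define Λ₀ = λI and Λₜ = Λₜ₋₁ + φₜφₜᵀ. Then Σ_{t=1}^n ‖φₜ‖²_{Λₜ₋₁⁻¹} ≤ 2 log(det(Λₙ)/det(λI)). -/

import Mathlib

open Matrix

/-- The regularized empirical covariance matrix `Λₜ = λI + Σ_{i<t} φᵢφᵢᵀ`. -/
noncomputable def covMat {p : ℕ} (lam : ℝ) (φ : ℕ → Fin p → ℝ) (t : ℕ) :
    Matrix (Fin p) (Fin p) ℝ :=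
  lam • (1 : Matrix (Fin p) (Fin p) ℝ) +
    ∑ i ∈ Finset.range t, Matrix.vecMulVec (φ i) (φ i)

lemma vecMulVec_mulVec' {p : ℕ} (v x : Fin p → ℝ) :
    (vecMulVec v v) *ᵥ x = (v ⬝ᵥ x) • v := by
  ext i
  simp only [mulVec, dotProduct, vecMulVec_apply, Pi.smul_apply, smul_eq_mul, Finset.sum_mul]
  exact Finset.sum_congr rfl fun j _ => by ring

lemma psd_vmv {p : ℕ} (v : Fin p → ℝ) : (vecMulVec v v).PosSemidef := by
  rw [show vecMulVec v v = replicateCol (Fin 1) v * replicateRow (Fin 1) v by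
    ext; simp [vecMulVec_apply, mul_apply]]
  have h := posSemidef_conjTranspose_mul_self (replicateRow (Fin 1) v)
  simpa [conjTranspose_replicateRow] using h

lemma covMat_posDef {p : ℕ} {lam : ℝ} (hlam : 0 < lam) (φ : ℕ → Fin p → ℝ) (t : ℕ) :
    (covMat lam φ t).PosDef := by
  apply Matrix.PosDef.add_posSemidef
  · rw [smul_one_eq_diagonal]
    exact Matrix.PosDef.diagonal fun _ => hlam
  · exact Finset.sum_induction _ _ (fun a b ha hb => ha.add hb) Matrix.PosSemidef.zero
      (fun i _ => psd_vmv _)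

lemma sum_mulVec' {p : ℕ} {ι : Type*} (s : Finset ι) (M : ι → Matrix (Fin p) (Fin p) ℝ)
    (x : Fin p → ℝ) : (∑ i ∈ s, M i) *ᵥ x = ∑ i ∈ s, (M i *ᵥ x) := by
  induction s using Finset.cons_induction with
  | empty => simp [Matrix.zero_mulVec]
  | cons a s ha ih => simp [Finset.sum_cons, add_mulVec, ih]

lemma dotProduct_sum' {p : ℕ} {ι : Type*} (s : Finset ι) (x : Fin p → ℝ)
    (f : ι → Fin p → ℝ) : x ⬝ᵥ (∑ i ∈ s, f i) = ∑ i ∈ s, x ⬝ᵥ f i := by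
  induction s using Finset.cons_induction with
  | empty => simp
  | cons a s ha ih => simp [Finset.sum_cons, dotProduct_add, ih]

lemma det_one_dim {inst : DecidableEq (Fin 1)} (M : Matrix (Fin 1) (Fin 1) ℝ) :
    @Matrix.det (Fin 1) inst _ ℝ _ M = M 0 0 := by
  have h : inst = instDecidableEqFin 1 := Subsingleton.elim _ _
  subst h
  exact Matrix.det_fin_one M

lemma covMat_quad {p : ℕ} (lam : ℝ) (φ : ℕ → Fin p → ℝ) (t : ℕ) (x : Fin p → ℝ) :
    x ⬝ᵥ (covMat lam φ t) *ᵥ x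
      = lam * (x ⬝ᵥ x) + ∑ i ∈ Finset.range t, (φ i ⬝ᵥ x) ^ 2 := by
  unfold covMat
  rw [add_mulVec, dotProduct_add, smul_mulVec, one_mulVec, dotProduct_smul,
    sum_mulVec', dotProduct_sum']
  congr 1
  refine Finset.sum_congr rfl fun i _ => ?_
  rw [vecMulVec_mulVec', dotProduct_smul, smul_eq_mul, dotProduct_comm, sq]

/-- Elliptical potential lemma: if `λ ≥ max{1, B²}` and `‖φₜ‖₂ ≤ B`, then
`Σₜ ‖φₜ‖²_{Λₜ₋₁⁻¹} ≤ 2 log(det Λₙ / det(λI))`. -/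
theorem elliptical_potential {p : ℕ} (n : ℕ) (lam B : ℝ)
    (hlam : max 1 (B ^ 2) ≤ lam)
    (φ : ℕ → Fin p → ℝ) (hφ : ∀ t, Real.sqrt (∑ j, (φ t j) ^ 2) ≤ B) :
    ∑ t ∈ Finset.range n, φ t ⬝ᵥ (covMat lam φ t)⁻¹.mulVec (φ t) ≤
      2 * Real.log ((covMat lam φ n).det /
        (lam • (1 : Matrix (Fin p) (Fin p) ℝ)).det) := by
  have hlam1 : (1:ℝ) ≤ lam := le_trans (le_max_left _ _) hlam
  have hlamB : B ^ 2 ≤ lam := le_trans (le_max_right _ _) hlam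
  have hlam0 : (0:ℝ) < lam := lt_of_lt_of_le one_pos hlam1
  set x : ℕ → ℝ := fun t => φ t ⬝ᵥ (covMat lam φ t)⁻¹ *ᵥ (φ t) with hx
  have hPD : ∀ t, (covMat lam φ t).PosDef := covMat_posDef hlam0 φ
  -- norm bound
  have hnorm : ∀ t, φ t ⬝ᵥ φ t ≤ B ^ 2 := by
    intro t
    have h0 : (0:ℝ) ≤ ∑ j, (φ t j) ^ 2 := Finset.sum_nonneg fun j _ => sq_nonneg _
    have := hφ t
    have hB0 : 0 ≤ B := le_trans (Real.sqrt_nonneg _) this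
    have h2 : (∑ j, (φ t j) ^ 2) = Real.sqrt (∑ j, (φ t j) ^ 2) ^ 2 :=
      (Real.sq_sqrt h0).symm
    calc φ t ⬝ᵥ φ t = ∑ j, (φ t j) ^ 2 := by
          simp [dotProduct, sq]
      _ = Real.sqrt (∑ j, (φ t j) ^ 2) ^ 2 := h2
      _ ≤ B ^ 2 := pow_le_pow_left₀ (Real.sqrt_nonneg _) this 2
  -- x nonneg
  have hx0 : ∀ t, 0 ≤ x t := by
    intro t
    have h := ((hPD t).posSemidef.inv).dotProduct_mulVec_nonneg (φ t)
    simpa [hx] using h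
  -- x ≤ 1
  have hx1 : ∀ t, x t ≤ 1 := by
    intro t
    set A := covMat lam φ t with hA
    set ψ : Fin p → ℝ := A⁻¹ *ᵥ φ t with hψ
    have hAψ : A *ᵥ ψ = φ t := by
      rw [hψ, mulVec_mulVec, Matrix.mul_nonsing_inv _ (hPD t).det_pos.ne'.isUnit, one_mulVec]
    have hxt : x t = φ t ⬝ᵥ ψ := rfl
    have hquad : ψ ⬝ᵥ A *ᵥ ψ = lam * (ψ ⬝ᵥ ψ) + ∑ i ∈ Finset.range t, (φ i ⬝ᵥ ψ) ^ 2 :=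
      covMat_quad lam φ t ψ
    have hψφ : ψ ⬝ᵥ A *ᵥ ψ = φ t ⬝ᵥ ψ := by
      rw [hAψ, dotProduct_comm]
    have hψψ0 : 0 ≤ ψ ⬝ᵥ ψ := by
      simpa [dotProduct, ← sq] using Finset.sum_nonneg fun j (_: j ∈ Finset.univ) =>
        sq_nonneg (ψ j)
    have hlamψ : lam * (ψ ⬝ᵥ ψ) ≤ x t := by
      rw [hxt, ← hψφ, hquad]
      have : 0 ≤ ∑ i ∈ Finset.range t, (φ i ⬝ᵥ ψ) ^ 2 :=
        Finset.sum_nonneg fun i _ => sq_nonneg _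
      linarith
    -- Cauchy-Schwarz
    have hCS : (φ t ⬝ᵥ ψ) ^ 2 ≤ (φ t ⬝ᵥ φ t) * (ψ ⬝ᵥ ψ) := by
      have := Finset.sum_mul_sq_le_sq_mul_sq Finset.univ (φ t) ψ
      simpa [dotProduct, sq] using this
    have hsq : x t ^ 2 ≤ x t := by
      have h1 : (φ t ⬝ᵥ φ t) * (ψ ⬝ᵥ ψ) ≤ lam * (ψ ⬝ᵥ ψ) :=
        mul_le_mul_of_nonneg_right (le_trans (hnorm t) hlamB) hψψ0
      calc x t ^ 2 = (φ t ⬝ᵥ ψ) ^ 2 := by rw [hxt]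
        _ ≤ (φ t ⬝ᵥ φ t) * (ψ ⬝ᵥ ψ) := hCS
        _ ≤ lam * (ψ ⬝ᵥ ψ) := h1
        _ ≤ x t := hlamψ
    nlinarith [hx0 t]
  -- determinant recurrence
  have hdet : ∀ t, (covMat lam φ (t+1)).det = (covMat lam φ t).det * (1 + x t) := by
    intro t
    have hsucc : covMat lam φ (t+1)
        = covMat lam φ t + replicateCol (Fin 1) (φ t) * replicateRow (Fin 1) (φ t) := by
      rw [← show vecMulVec (φ t) (φ t) = replicateCol (Fin 1) (φ t) * replicateRow (Fin 1) (φ t) by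
        ext; simp [vecMulVec_apply, mul_apply]]
      unfold covMat
      rw [Finset.sum_range_succ, add_assoc]
    rw [hsucc, ← show vecMulVec (φ t) (φ t) = replicateCol (Fin 1) (φ t) * replicateRow (Fin 1) (φ t) by
        ext; simp [vecMulVec_apply, mul_apply], vecMulVec_eq (Fin 1),
      det_add_replicateCol_mul_replicateRow (hPD t).det_pos.ne'.isUnit]
    congr 1
    have hM : (replicateRow (Fin 1) (φ t) * (covMat lam φ t)⁻¹ * replicateCol (Fin 1) (φ t)) 0 0
        = x t := by
      rw [Matrix.mul_assoc]
      have hcol : (covMat lam φ t)⁻¹ * replicateCol (Fin 1) (φ t)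
          = replicateCol (Fin 1) ((covMat lam φ t)⁻¹ *ᵥ φ t) := by
        ext i j
        simp [mul_apply, replicateCol_apply, mulVec, dotProduct]
      rw [hcol, replicateRow_mul_replicateCol_apply]
    rw [show (fun a b => decidableEq_of_subsingleton a b : DecidableEq (Fin 1))
        = instDecidableEqFin 1 from Subsingleton.elim _ _]
    rw [Matrix.det_unique, Fin.default_eq_zero, Matrix.add_apply, Matrix.one_apply_eq, hM]
  -- positivity of dets
  have hdpos : ∀ t, 0 < (covMat lam φ t).det := fun t => (hPD t).det_pos
  have hx1pos : ∀ t, (0:ℝ) < 1 + x t := fun t => by have := hx0 t; linarith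
  -- telescoping of logs
  have hlog : ∀ t, Real.log (covMat lam φ t).det
      = Real.log (covMat lam φ 0).det + ∑ i ∈ Finset.range t, Real.log (1 + x i) := by
    intro t
    induction t with
    | zero => simp
    | succ t ih =>
      rw [hdet t, Real.log_mul (hdpos t).ne' (hx1pos t).ne', ih, Finset.sum_range_succ]
      ring
  -- covMat at 0
  have hzero : covMat lam φ 0 = lam • (1 : Matrix (Fin p) (Fin p) ℝ) := by
    simp [covMat]
  -- pointwise bound x ≤ 2 log (1 + x)
  have hkey : ∀ t, x t ≤ 2 * Real.log (1 + x t) := by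
    intro t
    have h1 := Real.one_sub_inv_le_log_of_pos (hx1pos t)
    have h2 : (1 + x t) * (1 + x t)⁻¹ = 1 := mul_inv_cancel₀ (hx1pos t).ne'
    have h3 : x t ≤ 2 * (1 - (1 + x t)⁻¹) := by
      nlinarith [hx0 t, hx1 t, hx1pos t]
    linarith
  calc ∑ t ∈ Finset.range n, x t
      ≤ ∑ t ∈ Finset.range n, 2 * Real.log (1 + x t) :=
        Finset.sum_le_sum fun t _ => hkey t
    _ = 2 * ∑ t ∈ Finset.range n, Real.log (1 + x t) := by
        rw [Finset.mul_sum]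
    _ = 2 * (Real.log (covMat lam φ n).det - Real.log (covMat lam φ 0).det) := by
        rw [hlog n]; ring
    _ = 2 * Real.log ((covMat lam φ n).det / (lam • (1 : Matrix (Fin p) (Fin p) ℝ)).det) := by
        rw [← hzero, ← Real.log_div (hdpos n).ne' (hdpos 0).ne']
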